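/- (Adapted sketches give image inclusion) Suppose F(x) ∈ Im(DF(x)ᵀ) and the sketch S ∼ D_x satisfies Ker(E[SSᵀ]) ⊆ Ker(DF(x)) ⊆ Ker(Sᵀ) for all realizations S. Then Ker(E[H_S(x)]) ⊆ Ker(DF(x)), and hence F(x) ∈ Im(DF(x)ᵀ) ⊆ Im(E[H_S(x)]). -/

import Mathlib

open Matrix MeasureTheory

private lemma penrose_unique {n : Type*} [Fintype n] [DecidableEq n]
    (M X Y : Matrix n n ℝ)
    (h1 : M*X*M = M) (h2 : X*M*X = X) (h3 : (M*X)ᵀ = M*X) (h4 : (X*M)ᵀ = X*M)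
    (k1 : M*Y*M = M) (k2 : Y*M*Y = Y) (k3 : (M*Y)ᵀ = M*Y) (k4 : (Y*M)ᵀ = Y*M) :
    X = Y := by
  have c1 : (M*Y)*(M*X) = M*X := by rw [← mul_assoc, k1]
  have c2 : (M*X)*(M*Y) = M*X := by
    have := congrArg Matrix.transpose c1
    rwa [Matrix.transpose_mul, h3, k3] at this
  have e1 : X = X*M*Y := by
    have hXMX : X*(M*X) = X := by rw [← mul_assoc]; exact h2
    calc X = X*(M*X) := hXMX.symm
    _ = X*((M*X)*(M*Y)) := by rw [c2]
    _ = (X*(M*X))*(M*Y) := by simp only [mul_assoc]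
    _ = X*(M*Y) := by rw [hXMX]
    _ = X*M*Y := by rw [← mul_assoc]
  have d1 : (X*M)*(Y*M) = X*M := by
    rw [mul_assoc X M, ← mul_assoc M Y M, k1]
  have d2 : (Y*M)*(X*M) = X*M := by
    have := congrArg Matrix.transpose d1
    rwa [Matrix.transpose_mul, h4, k4] at this
  have e2 : X*M*Y = Y := by
    calc X*M*Y = ((Y*M)*(X*M))*Y := by rw [d2]
    _ = (Y*(M*X*M))*Y := by simp only [mul_assoc]
    _ = (Y*M)*Y := by rw [h1]
    _ = Y := k2
  exact e1.trans e2

private lemma pinv_symm {n : Type*} [Fintype n] [DecidableEq n]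
    (M X : Matrix n n ℝ) (hM : Mᵀ = M)
    (h1 : M*X*M = M) (h2 : X*M*X = X) (h3 : (M*X)ᵀ = M*X) (h4 : (X*M)ᵀ = X*M) :
    Xᵀ = X := by
  have k1 : M*Xᵀ*M = M := by
    have := congrArg Matrix.transpose h1
    simpa [Matrix.transpose_mul, hM, mul_assoc] using this
  have k2 : Xᵀ*M*Xᵀ = Xᵀ := by
    have := congrArg Matrix.transpose h2
    simpa [Matrix.transpose_mul, hM, mul_assoc] using this
  have k3 : (M*Xᵀ)ᵀ = M*Xᵀ := by
    have e : M*Xᵀ = X*M := by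
      calc M*Xᵀ = (X*Mᵀ)ᵀ := by rw [Matrix.transpose_mul, Matrix.transpose_transpose]
      _ = (X*M)ᵀ := by rw [hM]
      _ = X*M := h4
    rw [e]; exact h4
  have k4 : (Xᵀ*M)ᵀ = Xᵀ*M := by
    have e : Xᵀ*M = M*X := by
      calc Xᵀ*M = (Mᵀ*X)ᵀ := by rw [Matrix.transpose_mul, Matrix.transpose_transpose]
      _ = (M*X)ᵀ := by rw [hM]
      _ = M*X := h3
    rw [e]; exact h3
  exact (penrose_unique M X Xᵀ h1 h2 h3 h4 k1 k2 k3 k4).symm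

private lemma dp_self_nonneg {n : Type*} [Fintype n] (u : n → ℝ) : 0 ≤ u ⬝ᵥ u :=
  Finset.sum_nonneg fun _ _ => mul_self_nonneg _

/-- The quadratic form of `S X Sᵀ` is a sum of squares. -/
private lemma qform_eq {p m τ : ℕ} (J : Matrix (Fin p) (Fin m) ℝ)
    (Sw : Matrix (Fin m) (Fin τ) ℝ) (X : Matrix (Fin τ) (Fin τ) ℝ) (v : Fin m → ℝ)
    (h2 : X*(Swᵀ*Jᵀ*J*Sw)*X = X) (hXs : Xᵀ = X) :
    v ⬝ᵥ ((Sw*X*Swᵀ) *ᵥ v)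
      = ((J*Sw*X*Swᵀ) *ᵥ v) ⬝ᵥ ((J*Sw*X*Swᵀ) *ᵥ v) := by
  have hB : (J*Sw*X*Swᵀ)ᵀ*(J*Sw*X*Swᵀ) = Sw*X*Swᵀ := by
    calc (J*Sw*X*Swᵀ)ᵀ*(J*Sw*X*Swᵀ)
        = (Sw*(X*(Swᵀ*Jᵀ*J*Sw)*X))*Swᵀ := by
          simp [Matrix.transpose_mul, Matrix.transpose_transpose, hXs, Matrix.mul_assoc]
    _ = Sw*X*Swᵀ := by rw [h2]
  rw [← hB, ← Matrix.mulVec_mulVec, Matrix.dotProduct_mulVec, Matrix.vecMul_transpose]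

/-- Pointwise: vanishing quadratic form of `S X Sᵀ` forces `Sᵀ v = 0`. -/
private lemma qform_zero {p m τ : ℕ} (J : Matrix (Fin p) (Fin m) ℝ)
    (Sw : Matrix (Fin m) (Fin τ) ℝ) (X : Matrix (Fin τ) (Fin τ) ℝ) (v : Fin m → ℝ)
    (h1 : (Swᵀ*Jᵀ*J*Sw)*X*(Swᵀ*Jᵀ*J*Sw) = Swᵀ*Jᵀ*J*Sw)
    (h2 : X*(Swᵀ*Jᵀ*J*Sw)*X = X)
    (h4 : (X*(Swᵀ*Jᵀ*J*Sw))ᵀ = X*(Swᵀ*Jᵀ*J*Sw))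
    (hXs : Xᵀ = X)
    (hker : ∀ u, J *ᵥ u = 0 → Swᵀ *ᵥ u = 0)
    (hf : v ⬝ᵥ ((Sw*X*Swᵀ) *ᵥ v) = 0) : Swᵀ *ᵥ v = 0 := by
  set M : Matrix (Fin τ) (Fin τ) ℝ := Swᵀ*Jᵀ*J*Sw with hMdef
  have hM : Mᵀ = M := by
    simp [hMdef, Matrix.transpose_mul, Matrix.transpose_transpose, Matrix.mul_assoc]
  set w : Fin τ → ℝ := Swᵀ *ᵥ v with hwdef
  -- B v = 0
  have hBv : (J*Sw*X*Swᵀ) *ᵥ v = 0 := by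
    rw [qform_eq J Sw X v h2 hXs] at hf
    exact dotProduct_self_eq_zero.mp hf
  -- X w = 0
  have hXw : X *ᵥ w = 0 := by
    have hfac : X*Swᵀ = (X*(Swᵀ*Jᵀ))*(J*Sw*X*Swᵀ) := by
      calc X*Swᵀ = (X*M*X)*Swᵀ := by rw [h2]
      _ = (X*(Swᵀ*Jᵀ))*(J*Sw*X*Swᵀ) := by
          simp only [hMdef, Matrix.mul_assoc]
    calc X *ᵥ w = (X*Swᵀ) *ᵥ v := by rw [hwdef, Matrix.mulVec_mulVec]
    _ = (X*(Swᵀ*Jᵀ)) *ᵥ ((J*Sw*X*Swᵀ) *ᵥ v) := by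
        rw [hfac, ← Matrix.mulVec_mulVec]
    _ = 0 := by rw [hBv, Matrix.mulVec_zero]
  -- M w = 0
  have hcomm : X*M = M*X := by
    have : (X*M)ᵀ = M*X := by rw [Matrix.transpose_mul, hM, hXs]
    rw [← h4, this]
  have hMM : M = M*M*X := by
    calc M = M*X*M := h1.symm
    _ = M*(X*M) := by rw [mul_assoc]
    _ = M*(M*X) := by rw [hcomm]
    _ = M*M*X := by rw [← mul_assoc]
  have hMw : M *ᵥ w = 0 := by
    have step : (M*M) *ᵥ (X *ᵥ w) = M *ᵥ w := by
      rw [Matrix.mulVec_mulVec, ← hMM]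
    rw [← step, hXw, Matrix.mulVec_zero]
  -- (J S) w = 0
  have hJSw : (J*Sw) *ᵥ w = 0 := by
    have hM2 : M = (J*Sw)ᵀ*(J*Sw) := by
      simp [hMdef, Matrix.transpose_mul, Matrix.mul_assoc]
    have : ((J*Sw) *ᵥ w) ⬝ᵥ ((J*Sw) *ᵥ w) = 0 := by
      have : w ⬝ᵥ (M *ᵥ w) = 0 := by rw [hMw, dotProduct_zero]
      rwa [hM2, ← Matrix.mulVec_mulVec, Matrix.dotProduct_mulVec,
        Matrix.vecMul_transpose] at this
    exact dotProduct_self_eq_zero.mp this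
  -- S w = 0
  have hSw : Sw *ᵥ w = 0 := by
    have hJ : J *ᵥ (Sw *ᵥ w) = 0 := by
      rw [Matrix.mulVec_mulVec]; exact hJSw
    have hSt := hker _ hJ
    have : (Sw *ᵥ w) ⬝ᵥ (Sw *ᵥ w) = 0 := by
      rw [Matrix.dotProduct_mulVec, ← Matrix.mulVec_transpose, hSt, zero_dotProduct]
    exact dotProduct_self_eq_zero.mp this
  -- w = 0
  have : w ⬝ᵥ w = 0 := by
    calc w ⬝ᵥ w = (v ᵥ* Sw) ⬝ᵥ w := by rw [hwdef, ← Matrix.mulVec_transpose]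
    _ = v ⬝ᵥ (Sw *ᵥ w) := (Matrix.dotProduct_mulVec v Sw w).symm
    _ = 0 := by rw [hSw, dotProduct_zero]
  exact dotProduct_self_eq_zero.mp this

/-- For a symmetric real matrix `K`, `Ker K ⊆ Ker J` implies `Im Jᵀ ⊆ Im K`. -/
private lemma sym_range {p m : ℕ} (J : Matrix (Fin p) (Fin m) ℝ)
    (K : Matrix (Fin m) (Fin m) ℝ) (hK : Kᵀ = K)
    (hker : LinearMap.ker K.mulVecLin ≤ LinearMap.ker J.mulVecLin) :
    LinearMap.range (Jᵀ).mulVecLin ≤ LinearMap.range K.mulVecLin := by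
  have hdisj : Disjoint (LinearMap.range K.mulVecLin) (LinearMap.ker K.mulVecLin) := by
    rw [Submodule.disjoint_def]
    rintro x ⟨u, rfl⟩ hx
    have hx' : K *ᵥ (K *ᵥ u) = 0 := by
      simpa [Matrix.mulVecLin_apply] using LinearMap.mem_ker.mp hx
    have h0 : (K *ᵥ u) ⬝ᵥ (K *ᵥ u) = 0 := by
      rw [Matrix.dotProduct_mulVec, ← Matrix.mulVec_transpose, hK, hx', zero_dotProduct]
    simpa [Matrix.mulVecLin_apply] using dotProduct_self_eq_zero.mp h0
  have htop : LinearMap.range K.mulVecLin ⊔ LinearMap.ker K.mulVecLin = ⊤ := by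
    apply Submodule.eq_top_of_finrank_eq
    have h := Submodule.finrank_sup_add_finrank_inf_eq
      (LinearMap.range K.mulVecLin) (LinearMap.ker K.mulVecLin)
    rw [disjoint_iff.mp hdisj, finrank_bot, add_zero,
      LinearMap.finrank_range_add_finrank_ker] at h
    rw [h]
  rintro y ⟨u, rfl⟩
  have hy : (Jᵀ).mulVecLin u ∈
      LinearMap.range K.mulVecLin ⊔ LinearMap.ker K.mulVecLin := by
    rw [htop]; exact Submodule.mem_top
  obtain ⟨a, ha, b, hb, hab⟩ := Submodule.mem_sup.mp hy
  have hKb : K *ᵥ b = 0 := by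
    simpa [Matrix.mulVecLin_apply] using LinearMap.mem_ker.mp hb
  have hJb : J *ᵥ b = 0 := by
    simpa [Matrix.mulVecLin_apply] using LinearMap.mem_ker.mp (hker hb)
  have h1 : b ⬝ᵥ ((Jᵀ).mulVecLin u) = 0 := by
    rw [Matrix.mulVecLin_apply, Matrix.dotProduct_mulVec, Matrix.vecMul_transpose,
      hJb, zero_dotProduct]
  obtain ⟨w, hw⟩ := ha
  have h2 : b ⬝ᵥ a = 0 := by
    rw [← hw, Matrix.mulVecLin_apply, Matrix.dotProduct_mulVec,
      ← Matrix.mulVec_transpose, hK, hKb, zero_dotProduct]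
  have hbb : b ⬝ᵥ b = 0 := by
    have h3 : b ⬝ᵥ (a + b) = 0 := by rw [hab]; exact h1
    rwa [dotProduct_add, h2, zero_add] at h3
  have hb0 : b = 0 := dotProduct_self_eq_zero.mp hbb
  rw [← hab, hb0, add_zero]
  exact ⟨w, hw⟩

/-- adapted sketches give the image inclusion.  `J = DF(x)`,
`H ω = S(ω) Mdag(ω) S(ω)ᵀ` with `Mdag(ω)` the Moore–Penrose pseudoinverse of
`S(ω)ᵀ Jᵀ J S(ω)`.  If `F(x) ∈ Im(Jᵀ)` and the sketch is adapted, i.e.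
`Ker(E[S Sᵀ]) ⊆ Ker(J)` and `Ker(J) ⊆ Ker(Sᵀ)` for all realizations, then
`Ker(E[H]) ⊆ Ker(J)` and hence `Im(Jᵀ) ⊆ Im(E[H])`, so `F(x) ∈ Im(E[H])`. -/
theorem adapted_sketch_image_inclusion {p m τ : ℕ} {Ω : Type*} [MeasurableSpace Ω]
    (μ : Measure Ω) [IsProbabilityMeasure μ]
    (J : Matrix (Fin p) (Fin m) ℝ) (Fx : Fin m → ℝ)
    (S : Ω → Matrix (Fin m) (Fin τ) ℝ)
    (Mdag : Ω → Matrix (Fin τ) (Fin τ) ℝ)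
    (hpen1 : ∀ ω, ((S ω)ᵀ * Jᵀ * J * S ω) * Mdag ω * ((S ω)ᵀ * Jᵀ * J * S ω)
        = (S ω)ᵀ * Jᵀ * J * S ω)
    (hpen2 : ∀ ω, Mdag ω * ((S ω)ᵀ * Jᵀ * J * S ω) * Mdag ω = Mdag ω)
    (hpen3 : ∀ ω, (((S ω)ᵀ * Jᵀ * J * S ω) * Mdag ω)ᵀ = ((S ω)ᵀ * Jᵀ * J * S ω) * Mdag ω)
    (hpen4 : ∀ ω, (Mdag ω * ((S ω)ᵀ * Jᵀ * J * S ω))ᵀ = Mdag ω * ((S ω)ᵀ * Jᵀ * J * S ω))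
    (hSint : ∀ i j, Integrable (fun ω => (S ω * (S ω)ᵀ) i j) μ)
    (hHint : ∀ i j, Integrable (fun ω => (S ω * Mdag ω * (S ω)ᵀ) i j) μ)
    (hF : Fx ∈ LinearMap.range (Jᵀ).mulVecLin)
    (hadapt1 : LinearMap.ker (Matrix.of fun i j => ∫ ω, (S ω * (S ω)ᵀ) i j ∂μ).mulVecLin
        ≤ LinearMap.ker J.mulVecLin)
    (hadapt2 : ∀ ω, LinearMap.ker J.mulVecLin ≤ LinearMap.ker ((S ω)ᵀ).mulVecLin) :
    LinearMap.ker (Matrix.of fun i j => ∫ ω, (S ω * Mdag ω * (S ω)ᵀ) i j ∂μ).mulVecLin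
        ≤ LinearMap.ker J.mulVecLin ∧
    LinearMap.range (Jᵀ).mulVecLin
        ≤ LinearMap.range (Matrix.of fun i j => ∫ ω, (S ω * Mdag ω * (S ω)ᵀ) i j ∂μ).mulVecLin ∧
    Fx ∈ LinearMap.range (Matrix.of fun i j => ∫ ω, (S ω * Mdag ω * (S ω)ᵀ) i j ∂μ).mulVecLin := by
  set H : Ω → Matrix (Fin m) (Fin m) ℝ := fun ω => S ω * Mdag ω * (S ω)ᵀ with hHdef
  set K : Matrix (Fin m) (Fin m) ℝ :=
    Matrix.of fun i j => ∫ ω, (S ω * Mdag ω * (S ω)ᵀ) i j ∂μ with hKdef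
  -- symmetry of each Mdag ω
  have hMsym : ∀ ω, ((S ω)ᵀ * Jᵀ * J * S ω)ᵀ = (S ω)ᵀ * Jᵀ * J * S ω := fun ω => by
    simp [Matrix.transpose_mul, Matrix.transpose_transpose, Matrix.mul_assoc]
  have hXs : ∀ ω, (Mdag ω)ᵀ = Mdag ω := fun ω =>
    pinv_symm _ _ (hMsym ω) (hpen1 ω) (hpen2 ω) (hpen3 ω) (hpen4 ω)
  have hkerJS : ∀ ω, ∀ u, J *ᵥ u = 0 → (S ω)ᵀ *ᵥ u = 0 := by
    intro ω u hu
    have : u ∈ LinearMap.ker ((S ω)ᵀ).mulVecLin :=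
      hadapt2 ω (by simpa [LinearMap.mem_ker, Matrix.mulVecLin_apply] using hu)
    simpa [Matrix.mulVecLin_apply, Matrix.mulVec_transpose] using LinearMap.mem_ker.mp this
  -- Part 1 : kernel inclusion
  have part1 : LinearMap.ker K.mulVecLin ≤ LinearMap.ker J.mulVecLin := by
    intro v hv
    have hKv : K *ᵥ v = 0 := by
      simpa [Matrix.mulVecLin_apply] using LinearMap.mem_ker.mp hv
    -- the quadratic form integrand
    set f : Ω → ℝ := fun ω => v ⬝ᵥ (H ω *ᵥ v) with hfdef
    have hfsum : f = fun ω => ∑ i, ∑ j, v i * (H ω i j * v j) := by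
      funext ω
      simp [hfdef, dotProduct, Matrix.mulVec, Finset.mul_sum]
    have hfint : Integrable f μ := by
      rw [hfsum]
      exact integrable_finset_sum _ fun i _ => integrable_finset_sum _ fun j _ =>
        ((hHint i j).mul_const (v j)).const_mul (v i)
    have hfnn : 0 ≤ f := by
      intro ω
      have := qform_eq J (S ω) (Mdag ω) v (hpen2 ω) (hXs ω)
      simp only [hfdef, hHdef]
      rw [this]
      exact dp_self_nonneg _
    have hfI : ∫ ω, f ω ∂μ = 0 := by
      have hcalc : ∫ ω, f ω ∂μ = v ⬝ᵥ (K *ᵥ v) := by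
        rw [hfsum]
        rw [integral_finset_sum _ (fun i _ => integrable_finset_sum _ fun j _ =>
          ((hHint i j).mul_const (v j)).const_mul (v i))]
        have : ∀ i, ∫ ω, ∑ j, v i * (H ω i j * v j) ∂μ
            = ∑ j, v i * ((∫ ω, H ω i j ∂μ) * v j) := by
          intro i
          rw [integral_finset_sum _ (fun j _ =>
            ((hHint i j).mul_const (v j)).const_mul (v i))]
          refine Finset.sum_congr rfl fun j _ => ?_
          rw [integral_const_mul, integral_mul_const]
        rw [Finset.sum_congr rfl fun i _ => this i]
        simp [hKdef, dotProduct, Matrix.mulVec, Finset.mul_sum]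
        rfl
      rw [hcalc, hKv, dotProduct_zero]
    have hae : f =ᵐ[μ] 0 := (integral_eq_zero_iff_of_nonneg hfnn hfint).mp hfI
    have hSae : ∀ᵐ ω ∂μ, (S ω)ᵀ *ᵥ v = 0 := by
      filter_upwards [hae] with ω hω
      exact qform_zero J (S ω) (Mdag ω) v (hpen1 ω) (hpen2 ω) (hpen4 ω) (hXs ω)
        (hkerJS ω) (by simpa [hfdef, hHdef] using hω)
    -- E[S Sᵀ] v = 0
    have hKsq : (Matrix.of fun i j => ∫ ω, (S ω * (S ω)ᵀ) i j ∂μ) *ᵥ v = 0 := by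
      funext i
      have : ((Matrix.of fun i j => ∫ ω, (S ω * (S ω)ᵀ) i j ∂μ) *ᵥ v) i
          = ∫ ω, ((S ω * (S ω)ᵀ) *ᵥ v) i ∂μ := by
        have hsum : ∀ ω, ((S ω * (S ω)ᵀ) *ᵥ v) i = ∑ j, (S ω * (S ω)ᵀ) i j * v j := by
          intro ω; simp [Matrix.mulVec, dotProduct]
        simp only [hsum]
        rw [integral_finset_sum _ (fun j _ => (hSint i j).mul_const (v j))]
        simp only [Matrix.mulVec, dotProduct, Matrix.of_apply]
        refine Finset.sum_congr rfl fun j _ => ?_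
        rw [integral_mul_const]
      rw [this]
      have : ∀ᵐ ω ∂μ, ((S ω * (S ω)ᵀ) *ᵥ v) i = 0 := by
        filter_upwards [hSae] with ω hω
        rw [← Matrix.mulVec_mulVec, hω, Matrix.mulVec_zero]
        rfl
      rw [integral_congr_ae this, integral_zero]
      rfl
    exact hadapt1 (by simpa [LinearMap.mem_ker, Matrix.mulVecLin_apply] using hKsq)
  -- symmetry of K
  have hKsym : Kᵀ = K := by
    have hHsym : ∀ ω, (H ω)ᵀ = H ω := fun ω => by
      simp [hHdef, Matrix.transpose_mul, Matrix.transpose_transpose, hXs ω, Matrix.mul_assoc]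
    ext i j
    have : ∀ ω, H ω j i = H ω i j := fun ω => by
      conv_lhs => rw [← hHsym ω]
      rfl
    simp only [Matrix.transpose_apply, hKdef, Matrix.of_apply]
    exact integral_congr_ae (Filter.Eventually.of_forall fun ω => this ω)
  have part2 : LinearMap.range (Jᵀ).mulVecLin ≤ LinearMap.range K.mulVecLin :=
    sym_range J K hKsym part1
  exact ⟨part1, part2, part2 hF⟩
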